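/- Let π ∈ P(E), let C ⊂ P(E) be convex, and let μ* ∈ C satisfy the Pythagorean inequality: Ent(η | π) ≥ Ent(η | μ*) + Ent(μ* | π) for all η ∈ C. Then μ* minimizes over all probability measures μ ∈ P(E) the quantity sup_{η ∈ C} [Ent(η | μ) − Ent(η | π)], and the minimum value equals −Ent(μ* | π), attained in the inner supremum at η = μ*. -/

import Mathlib

open MeasureTheory

/-- Relative entropy `Ent(η | μ) = ∫ ln (dη/dμ) dη`. -/
noncomputable def Ent {E : Type*} [MeasurableSpace E] (η μ : Measure E) : ℝ :=
  ∫ x, Real.log ((η.rnDeriv μ) x).toReal ∂η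

/-- Relative entropy is nonnegative: Gibbs' inequality. -/
lemma Ent_nonneg {E : Type*} [MeasurableSpace E] (ν μ : Measure E)
    [IsProbabilityMeasure ν] [IsProbabilityMeasure μ] (hνμ : ν ≪ μ)
    (hint : Integrable (fun x => Real.log ((ν.rnDeriv μ) x).toReal) ν) :
    0 ≤ Ent ν μ := by
  have hneg : (fun x => -Real.log ((ν.rnDeriv μ) x).toReal)
      =ᵐ[ν] fun x => Real.log ((μ.rnDeriv ν) x).toReal := by
    have := MeasureTheory.neg_llr (μ := ν) (ν := μ) hνμ
    filter_upwards [this] with x hx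
    simpa [MeasureTheory.llr] using hx
  have hint2 : Integrable (fun x => Real.log ((μ.rnDeriv ν) x).toReal) ν :=
    (hint.neg).congr hneg
  have hintRn : Integrable (fun x => ((μ.rnDeriv ν) x).toReal) ν := by
    rw [← MeasureTheory.integrableOn_univ]
    exact Measure.integrableOn_toReal_rnDeriv (by simp)
  have hle : ∫ x, Real.log ((μ.rnDeriv ν) x).toReal ∂ν
      ≤ ∫ x, (((μ.rnDeriv ν) x).toReal - 1) ∂ν := by
    refine integral_mono_ae hint2 (hintRn.sub (integrable_const 1)) ?_
    filter_upwards [Measure.rnDeriv_pos' hνμ, Measure.rnDeriv_lt_top μ ν]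
      with x hpos hlt
    have h0 : 0 < ((μ.rnDeriv ν) x).toReal := ENNReal.toReal_pos hpos.ne' hlt.ne
    linarith [Real.log_le_sub_one_of_pos h0]
  have hle2 : ∫ x, (((μ.rnDeriv ν) x).toReal - 1) ∂ν ≤ 0 := by
    rw [integral_sub hintRn (integrable_const 1)]
    simp only [integral_const, measure_univ, probReal_univ, ENNReal.toReal_one, smul_eq_mul, one_mul]
    have := Measure.setIntegral_toReal_rnDeriv_le (μ := μ) (ν := ν)
      (s := Set.univ) (by simp)
    simp only [setIntegral_univ, measure_univ, probReal_univ, ENNReal.toReal_one] at this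
    linarith
  have : ∫ x, Real.log ((μ.rnDeriv ν) x).toReal ∂ν ≤ 0 := hle.trans hle2
  have heq : ∫ x, Real.log ((μ.rnDeriv ν) x).toReal ∂ν = -Ent ν μ := by
    rw [← integral_congr_ae hneg, integral_neg]; rfl
  linarith [heq ▸ this]

/-- Min-max reformulation of the Pythagorean theorem: if `μ* ∈ C` satisfies the Pythagorean
inequality `Ent(η|π) ≥ Ent(η|μ*) + Ent(μ*|π)` on the convex class `C`, then `μ*` minimizes
`μ ↦ sup_{η ∈ C} [Ent(η|μ) - Ent(η|π)]` over all probability measures: the supremum for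
`μ = μ*` is at most `-Ent(μ*|π)`, this value is attained at `η = μ*`, and for any proposal
`μ` the supremum is at least `-Ent(μ*|π)` (witnessed by some `η ∈ C`). -/
theorem minmax_pythagorean {E : Type*} [MeasurableSpace E] [StandardBorelSpace E]
    (π : Measure E) [IsProbabilityMeasure π]
    (C : Set (Measure E))
    (hCprob : ∀ η ∈ C, IsProbabilityMeasure η)
    (hconv : ∀ η₁ ∈ C, ∀ η₂ ∈ C, ∀ a b : ENNReal, a + b = 1 → a • η₁ + b • η₂ ∈ C)
    (μs : Measure E) [IsProbabilityMeasure μs] (hμsC : μs ∈ C) (hμsac : μs ≪ π)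
    (hμsfin : Integrable (fun x => Real.log ((μs.rnDeriv π) x).toReal) μs)
    (hPyth : ∀ η ∈ C, η ≪ π → η ≪ μs →
      Integrable (fun x => Real.log ((η.rnDeriv π) x).toReal) η →
      Integrable (fun x => Real.log ((η.rnDeriv μs) x).toReal) η →
      Ent η π ≥ Ent η μs + Ent μs π) :
    -- (i) for the proposal `μ*`, the relative log-cost of any admissible `η` is at most
    -- `-Ent(μ*|π)` :
    (∀ η ∈ C, η ≪ π → η ≪ μs →
      Integrable (fun x => Real.log ((η.rnDeriv π) x).toReal) η →
      Integrable (fun x => Real.log ((η.rnDeriv μs) x).toReal) η →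
      Ent η μs - Ent η π ≤ -Ent μs π) ∧
    -- (ii) the bound is attained in the inner supremum at `η = μ*` :
    (Ent μs μs - Ent μs π = -Ent μs π) ∧
    -- (iii) for every proposal `μ`, the worst relative log-cost is at least `-Ent(μ*|π)` :
    (∀ μ : Measure E, IsProbabilityMeasure μ → μs ≪ μ →
      Integrable (fun x => Real.log ((μs.rnDeriv μ) x).toReal) μs →
      ∃ η ∈ C, (η ≪ π ∧ η ≪ μ ∧
        Integrable (fun x => Real.log ((η.rnDeriv π) x).toReal) η ∧
        Integrable (fun x => Real.log ((η.rnDeriv μ) x).toReal) η) ∧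
        -Ent μs π ≤ Ent η μ - Ent η π) := by
  have hEntself : Ent μs μs = 0 := by
    unfold Ent
    rw [integral_congr_ae (g := fun _ => (0 : ℝ)) ?_, integral_zero]
    filter_upwards [Measure.rnDeriv_self μs] with x hx
    simp [hx]
  refine ⟨?_, ?_, ?_⟩
  · intro η hηC hηπ hημs h1 h2
    have := hPyth η hηC hηπ hημs h1 h2
    linarith
  · rw [hEntself]; ring
  · intro μ _ hμsμ hμsint
    refine ⟨μs, hμsC, ⟨hμsac, hμsμ, hμsfin, hμsint⟩, ?_⟩
    have h0 : 0 ≤ Ent μs μ := Ent_nonneg μs μ hμsμ hμsint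
    linarith
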